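/- For a prime p > 3, define φ(X) = ((X+1)^p − X^p − 1)/p ∈ Z[X]. Then over the field F_p, the reduction of φ(X, −1) := ((X−1)^p − X^p + 1)/p factors as −X(X−1)·∏_{α ∈ F_p, α ≠ 0,1}(X−α)² · ∏_{β}(X−β), where the β run over the roots not lying in F_p, each occurring with multiplicity 1. -/

import Mathlib

open Polynomial

-- generic multiplicity lemmas
section mult
variable {F : Type*} [Field F]

lemma mult_le_one {f : F[X]} (hf : f ≠ 0) {b : F} (h : (derivative f).eval b ≠ 0) :
    rootMultiplicity b f ≤ 1 := by
  by_contra hlt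
  push_neg at hlt
  have h2 : (X - C b) ^ 2 ∣ f :=
    dvd_trans (pow_dvd_pow _ hlt) (pow_rootMultiplicity_dvd f b)
  obtain ⟨g, hg⟩ := h2
  apply h
  subst hg
  simp [derivative_mul, derivative_pow, eval_mul, eval_add, eval_pow]

lemma mult_le_two {f : F[X]} {b : F} (h : (derivative (derivative f)).eval b ≠ 0) :
    rootMultiplicity b f ≤ 2 := by
  by_contra hlt
  push_neg at hlt
  have h2 : (X - C b) ^ 3 ∣ f :=
    dvd_trans (pow_dvd_pow _ hlt) (pow_rootMultiplicity_dvd f b)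
  obtain ⟨g, hg⟩ := h2
  apply h
  subst hg
  simp [derivative_mul, derivative_pow, eval_mul, eval_add, eval_pow]

lemma two_le_mult {f : F[X]} (hf : f ≠ 0) {b : F} (h0 : f.eval b = 0)
    (h1 : (derivative f).eval b = 0) : 2 ≤ rootMultiplicity b f := by
  rw [le_rootMultiplicity_iff hf]
  obtain ⟨g, hg⟩ := (dvd_iff_isRoot).mpr h0
  subst hg
  have hgb : g.eval b = 0 := by
    simpa [derivative_mul, eval_mul, eval_add] using h1
  obtain ⟨k, hk⟩ := (dvd_iff_isRoot).mpr hgb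
  rw [hk]
  ring_nf
  exact ⟨k, by ring⟩

end mult

lemma mem_range_iff_pow (p : ℕ) [hp : Fact p.Prime] (x : AlgebraicClosure (ZMod p)) :
    x ∈ Set.range (algebraMap (ZMod p) (AlgebraicClosure (ZMod p))) ↔ x ^ p = x := by
  constructor
  · rintro ⟨a, rfl⟩
    rw [← map_pow, ZMod.pow_card]
  · intro h
    classical
    have hcard : Fintype.card (ZMod p) = p := ZMod.card p
    have hroots : (X ^ p - X : (ZMod p)[X]).roots = Finset.univ.val := by
      have := FiniteField.roots_X_pow_card_sub_X (ZMod p)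
      rwa [hcard] at this
    have h2 := hp.out.two_le
    have hmon : (X ^ p - X : (ZMod p)[X]).Monic := by
      have h1 : p - 1 + 1 = p := by omega
      have : (X ^ (p - 1 + 1) - X : (ZMod p)[X]).Monic := by
        apply monic_X_pow_sub
        rw [degree_X]
        exact_mod_cast (by omega : 1 < p - 1 + 1)
      rwa [h1] at this
    have hdeg : (X ^ p - X : (ZMod p)[X]).natDegree = p :=
      FiniteField.X_pow_card_sub_X_natDegree_eq _ hp.out.one_lt
    have heq : ((X ^ p - X : (ZMod p)[X]).roots.map fun a => X - C a).prod
        = X ^ p - X :=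
      prod_multiset_X_sub_C_of_monic_of_roots_card_eq hmon
        (by rw [hroots, hdeg]; simp [hcard])
    rw [hroots] at heq
    have := congrArg (aeval x) heq
    rw [map_multiset_prod, map_sub, map_pow, aeval_X, h, sub_self] at this
    have h0 : ∃ y ∈ (Finset.univ.val.map fun a : ZMod p => X - C a).map (aeval x),
        y = 0 := by
      rw [Multiset.prod_eq_zero_iff] at this
      exact ⟨0, this, rfl⟩
    obtain ⟨y, hy, rfl⟩ := h0
    rw [Multiset.mem_map] at hy
    obtain ⟨g, hg, hg0⟩ := hy
    rw [Multiset.mem_map] at hg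
    obtain ⟨a, _, rfl⟩ := hg
    refine ⟨a, ?_⟩
    have : aeval x (X - C a) = 0 := hg0
    rw [map_sub, aeval_X, aeval_C] at this
    exact (sub_eq_zero.mp this).symm

/-- For a prime `p > 3` and `φ(X,−1) = ((X−1)^p − X^p + 1)/p ∈ ℤ[X]`, the
reduction of `φ(X,−1)` mod `p` factors over an algebraic closure of `F_p` as
`−X(X−1)·∏_i (X−α_i)² · ∏_j (X−β_j)` where the `α_i` are the distinct roots
lying in `F_p \ {0,1}` (each with multiplicity `2`) and the `β_j` are the
distinct roots not lying in `F_p` (each with multiplicity `1`). -/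
theorem phi_factorization (p : ℕ) [hp : Fact p.Prime] (h3 : 3 < p)
    (φ : Polynomial ℤ)
    (hφ : (C (p : ℤ)) * φ = (X - 1) ^ p - X ^ p + 1) :
    ∃ (r s : ℕ) (α : Fin r → AlgebraicClosure (ZMod p))
      (β : Fin s → AlgebraicClosure (ZMod p)),
      Function.Injective α ∧ Function.Injective β ∧
      (∀ i, α i ∈ Set.range (algebraMap (ZMod p) (AlgebraicClosure (ZMod p))) ∧
        α i ≠ 0 ∧ α i ≠ 1) ∧
      (∀ j, β j ∉ Set.range (algebraMap (ZMod p) (AlgebraicClosure (ZMod p)))) ∧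
      φ.map (Int.castRingHom (AlgebraicClosure (ZMod p))) =
        -(X * (X - 1) * (∏ i, (X - C (α i)) ^ 2) * ∏ j, (X - C (β j))) := by
  classical
  have hp2 : 2 ≤ p := hp.out.two_le
  have hpne : (p : ℤ) ≠ 0 := by exact_mod_cast hp.out.ne_zero
  have hodd : Odd p := hp.out.odd_of_ne_two (by omega)
  have hq : p - 1 + 1 = p := by omega
  have hq2 : p - 2 + 1 = p - 1 := by omega
  have heven : Even (p - 1) := Nat.Odd.sub_odd hodd odd_one
  have hCne : (C (p : ℤ)) ≠ 0 := fun h => hpne (by simpa using congrArg (fun g => coeff g 0) h)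
  -- derivative of φ over ℤ
  have hder : derivative φ = (X - 1) ^ (p - 1) - X ^ (p - 1) := by
    apply mul_left_cancel₀ hCne
    have h1 := congrArg derivative hφ
    rw [derivative_C_mul, derivative_add, derivative_sub, derivative_one, add_zero,
      derivative_pow, derivative_X_pow, derivative_sub, derivative_X, derivative_one,
      sub_zero, mul_one] at h1
    rw [mul_sub, h1]
  -- eval at 0 and 1 over ℤ
  have heval0 : φ.eval 0 = 0 := by
    have h1 := congrArg (eval 0) hφ
    simp only [eval_mul, eval_C, eval_add, eval_sub, eval_pow, eval_X, eval_one,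
      zero_sub, zero_pow hp.out.ne_zero, hodd.neg_one_pow] at h1
    have : (p : ℤ) * φ.eval 0 = 0 := by rw [h1]; ring
    exact (mul_eq_zero.mp this).resolve_left hpne
  have heval1 : φ.eval 1 = 0 := by
    have h1 := congrArg (eval 1) hφ
    simp only [eval_mul, eval_C, eval_add, eval_sub, eval_pow, eval_X, eval_one,
      sub_self, zero_pow hp.out.ne_zero, one_pow] at h1
    have : (p : ℤ) * φ.eval 1 = 0 := by rw [h1]; ring
    exact (mul_eq_zero.mp this).resolve_left hpne
  -- top coefficient over ℤ
  have hsub : (X - 1 : ℤ[X]) = X + C (-1) := by rw [map_neg, C_1]; ring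
  have hcoeff : φ.coeff (p - 1) = -1 := by
    apply mul_left_cancel₀ hpne
    have h1 := congrArg (fun g => coeff g (p - 1)) hφ
    simp only [coeff_C_mul, coeff_add, coeff_sub, hsub, coeff_X_add_C_pow, coeff_X_pow,
      coeff_one] at h1
    rw [h1]
    have e1 : p - (p - 1) = 1 := by omega
    rw [e1, Nat.choose_symm (by omega : 1 ≤ p), Nat.choose_one_right]
    have e2 : ¬ (p - 1 = p) := by omega
    have e3 : ¬ (p - 1 = 0) := by omega
    simp [e2, e3]
  have hcoeff_hi : ∀ k, p - 1 < k → φ.coeff k = 0 := by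
    intro k hk
    apply mul_left_cancel₀ hpne
    have h1 := congrArg (fun g => coeff g k) hφ
    simp only [coeff_C_mul, coeff_add, coeff_sub, hsub, coeff_X_add_C_pow, coeff_X_pow,
      coeff_one] at h1
    rw [h1]
    have e3 : ¬ (k = 0) := by omega
    rcases eq_or_lt_of_le (by omega : p ≤ k) with h | h
    · simp [← h, e3, hp.out.ne_zero]
    · rw [Nat.choose_eq_zero_of_lt h]
      have e2 : ¬ (k = p) := by omega
      simp [e2, e3]
  -- now over F
  set F := AlgebraicClosure (ZMod p) with hFdef
  set ψ := Int.castRingHom F with hψdef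
  set f := φ.map ψ with hfdef
  have hfc : f.coeff (p - 1) = -1 := by
    rw [hfdef, coeff_map, hcoeff]; simp
  have hfne : f ≠ 0 := by
    intro h
    rw [h, coeff_zero] at hfc
    have h2 := hfc.symm
    rw [neg_eq_zero] at h2
    exact one_ne_zero h2
  have hdeg : f.natDegree = p - 1 := by
    refine le_antisymm (natDegree_le_iff_coeff_eq_zero.mpr ?_) (le_natDegree_of_ne_zero ?_)
    · intro k hk
      rw [hfdef, coeff_map, hcoeff_hi k hk, map_zero]
    · rw [hfc]; exact neg_ne_zero.mpr one_ne_zero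
  have hlead : f.leadingCoeff = -1 := by rw [leadingCoeff, hdeg, hfc]
  have hfd : derivative f = (X - 1) ^ (p - 1) - X ^ (p - 1) := by
    rw [hfdef, derivative_map, hder]
    simp [Polynomial.map_sub, Polynomial.map_pow, Polynomial.map_one]
  have hf0 : f.eval 0 = 0 := by
    rw [hfdef, eval_map, ← (map_zero ψ), eval₂_at_apply, heval0, map_zero]
  have hf1 : f.eval 1 = 0 := by
    rw [hfdef, eval_map, ← (map_one ψ), eval₂_at_apply, heval1, map_zero]
  have hd0 : (derivative f).eval 0 = 1 := by
    rw [hfd]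
    simp [zero_pow (by omega : p - 1 ≠ 0), heven.neg_one_pow]
  have hd1 : (derivative f).eval 1 = -1 := by
    rw [hfd]
    simp [zero_pow (by omega : p - 1 ≠ 0)]
  have hchar : ∀ b : F, (b - 1) ^ p = b ^ p - 1 := by
    intro b
    rw [sub_pow_char, one_pow]
  have hkey : ∀ b : F, b ≠ 0 → b ≠ 1 → ((derivative f).eval b = 0 ↔ b ^ p = b) := by
    intro b hb0 hb1
    have hbs : b - 1 ≠ 0 := sub_ne_zero.mpr hb1
    have hbb : b * (b - 1) ≠ 0 := mul_ne_zero hb0 hbs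
    have hev : (derivative f).eval b = (b - 1) ^ (p - 1) - b ^ (p - 1) := by
      rw [hfd]; simp
    have e1 : ((b - 1) ^ (p - 1) - b ^ (p - 1)) * (b * (b - 1)) = b ^ p - b := by
      have e0 : ((b - 1) ^ (p - 1) - b ^ (p - 1)) * (b * (b - 1)) =
          b * ((b - 1) ^ (p - 1) * (b - 1)) - b ^ (p - 1) * b * (b - 1) := by ring
      rw [e0, ← pow_succ, ← pow_succ, hq, hchar b]
      ring
    rw [hev]
    constructor
    · intro h
      have h2 : b ^ p - b = 0 := by rw [← e1, h, zero_mul]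
      exact sub_eq_zero.mp h2
    · intro h
      have h2 : ((b - 1) ^ (p - 1) - b ^ (p - 1)) * (b * (b - 1)) = 0 := by
        rw [e1, h, sub_self]
      exact (mul_eq_zero.mp h2).resolve_right hbb
  have hd2 : ∀ b : F, b ≠ 0 → b ≠ 1 → b ^ p = b →
      (derivative (derivative f)).eval b ≠ 0 := by
    intro b hb0 hb1 hbp
    have hbs : b - 1 ≠ 0 := sub_ne_zero.mpr hb1
    have hfp : b ^ (p - 1) = 1 := by
      have : b ^ (p - 1) * b = 1 * b := by rw [← pow_succ, hq, hbp, one_mul]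
      exact mul_right_cancel₀ hb0 this
    have hfp1 : (b - 1) ^ (p - 1) = 1 := by
      have h1 : (b - 1) ^ p = b - 1 := by rw [hchar b, hbp]
      have : (b - 1) ^ (p - 1) * (b - 1) = 1 * (b - 1) := by
        rw [← pow_succ, hq, h1, one_mul]
      exact mul_right_cancel₀ hbs this
    have hcast : ((p - 1 : ℕ) : F) = -1 := by
      rw [Nat.cast_sub (by omega : 1 ≤ p), CharP.cast_eq_zero F p]
      simp
    have hev : (derivative (derivative f)).eval b =
        -((b - 1) ^ (p - 2) - b ^ (p - 2)) := by
      rw [hfd, derivative_sub, derivative_pow, derivative_X_pow, derivative_sub,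
        derivative_X, derivative_one, sub_zero, mul_one]
      have e : p - 1 - 1 = p - 2 := by omega
      simp [hcast, e]
      ring
    rw [hev]
    intro hc
    have h2 : (b - 1) ^ (p - 2) - b ^ (p - 2) = 0 := by
      have := neg_eq_zero.mp hc
      exact this
    have h3 : (b - 1) ^ (p - 2) = b ^ (p - 2) := sub_eq_zero.mp h2
    have h4 : (b - 1) ^ (p - 2) * ((b - 1) * b) = b ^ (p - 2) * (b * (b - 1)) := by
      rw [h3]; ring
    rw [← mul_assoc, ← pow_succ, ← mul_assoc, ← pow_succ, hq2, hfp, hfp1, one_mul,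
      one_mul] at h4
    have h5 : (1 : F) = 0 := by linear_combination h4
    exact one_ne_zero h5
  -- root sets
  set A := f.roots.toFinset.filter (fun b => b ^ p = b ∧ b ≠ 0 ∧ b ≠ 1) with hA
  set B := f.roots.toFinset.filter (fun b => ¬ b ^ p = b) with hB
  have hmemA : ∀ b : F, b ∈ A ↔ (f.IsRoot b ∧ b ^ p = b ∧ b ≠ 0 ∧ b ≠ 1) := by
    intro b
    rw [hA, Finset.mem_filter, Multiset.mem_toFinset, mem_roots hfne]
  have hmemB : ∀ b : F, b ∈ B ↔ (f.IsRoot b ∧ ¬ b ^ p = b) := by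
    intro b
    rw [hB, Finset.mem_filter, Multiset.mem_toFinset, mem_roots hfne]
  have hm0 : rootMultiplicity 0 f = 1 :=
    le_antisymm (mult_le_one hfne (by rw [hd0]; exact one_ne_zero))
      ((rootMultiplicity_pos hfne).mpr hf0)
  have hm1 : rootMultiplicity 1 f = 1 :=
    le_antisymm (mult_le_one hfne (by rw [hd1]; exact neg_ne_zero.mpr one_ne_zero))
      ((rootMultiplicity_pos hfne).mpr hf1)
  have hroots_eq : f.roots = (0 : F) ::ₘ (1 : F) ::ₘ (A.val + A.val + B.val) := by
    apply Multiset.ext.mpr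
    intro b
    rw [count_roots, Multiset.count_cons, Multiset.count_cons, Multiset.count_add,
      Multiset.count_add, Multiset.count_eq_of_nodup A.nodup,
      Multiset.count_eq_of_nodup B.nodup]
    by_cases hb0 : b = 0
    · subst hb0
      have hnA : (0 : F) ∉ A := fun h => ((hmemA 0).mp h).2.2.1 rfl
      have hnB : (0 : F) ∉ B := fun h => ((hmemB 0).mp h).2 (zero_pow hp.out.ne_zero)
      have h01 : ¬ ((0 : F) = 1) := fun h => one_ne_zero h.symm
      simp [hm0, hnA, hnB, h01]
    by_cases hb1 : b = 1
    · subst hb1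
      have hnA : (1 : F) ∉ A := fun h => ((hmemA 1).mp h).2.2.2 rfl
      have hnB : (1 : F) ∉ B := fun h => ((hmemB 1).mp h).2 (one_pow p)
      simp [hm1, hnA, hnB, hb0]
    by_cases hbp : b ^ p = b
    · have hnB : b ∉ B := fun h => ((hmemB b).mp h).2 hbp
      by_cases hroot : f.IsRoot b
      · have hbA : b ∈ A := (hmemA b).mpr ⟨hroot, hbp, hb0, hb1⟩
        have hm2 : rootMultiplicity b f = 2 :=
          le_antisymm (mult_le_two (hd2 b hb0 hb1 hbp))
            (two_le_mult hfne hroot ((hkey b hb0 hb1).mpr hbp))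
        simp [hm2, hbA, hnB, hb0, hb1]
      · have hnA : b ∉ A := fun h => hroot ((hmemA b).mp h).1
        simp [rootMultiplicity_eq_zero hroot, hnA, hnB, hb0, hb1]
    · have hnA : b ∉ A := fun h => hbp ((hmemA b).mp h).2.1
      by_cases hroot : f.IsRoot b
      · have hbB : b ∈ B := (hmemB b).mpr ⟨hroot, hbp⟩
        have hne : (derivative f).eval b ≠ 0 := fun h => hbp ((hkey b hb0 hb1).mp h)
        have hm2 : rootMultiplicity b f = 1 :=
          le_antisymm (mult_le_one hfne hne) ((rootMultiplicity_pos hfne).mpr hroot)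
        simp [hm2, hbB, hnA, hb0, hb1]
      · have hnB : b ∉ B := fun h => hroot ((hmemB b).mp h).1
        simp [rootMultiplicity_eq_zero hroot, hnA, hnB, hb0, hb1]
  have hsplit : f = C f.leadingCoeff * (f.roots.map fun a => X - C a).prod :=
    (IsAlgClosed.splits f).eq_prod_roots
  rw [hroots_eq, hlead] at hsplit
  refine ⟨A.card, B.card, fun i => ((A.equivFin.symm i : A) : F),
    fun j => ((B.equivFin.symm j : B) : F), ?_, ?_, ?_, ?_, ?_⟩
  · intro i j h
    exact A.equivFin.symm.injective (Subtype.coe_injective h)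
  · intro i j h
    exact B.equivFin.symm.injective (Subtype.coe_injective h)
  · intro i
    have h := (hmemA _).mp (A.equivFin.symm i).2
    exact ⟨(mem_range_iff_pow p _).mpr h.2.1, h.2.2.1, h.2.2.2⟩
  · intro j
    have h := (hmemB _).mp (B.equivFin.symm j).2
    exact fun hr => h.2 ((mem_range_iff_pow p _).mp hr)
  · have hprodA : (∏ i : Fin A.card, (X - C (((A.equivFin.symm i : A)) : F)) ^ 2)
        = (A.val.map fun a => X - C a).prod * (A.val.map fun a => X - C a).prod := by
      rw [Equiv.prod_comp A.equivFin.symm (fun a : A => (X - C (a : F)) ^ 2),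
        Finset.prod_coe_sort A (fun x : F => (X - C x) ^ 2), Finset.prod_pow, Finset.prod_eq_multiset_prod]
      ring
    have hprodB : (∏ j : Fin B.card, (X - C (((B.equivFin.symm j : B)) : F)))
        = (B.val.map fun a => X - C a).prod := by
      rw [Equiv.prod_comp B.equivFin.symm (fun a : B => (X - C (a : F))),
        Finset.prod_coe_sort B (fun x : F => (X - C x)), Finset.prod_eq_multiset_prod]
    rw [hsplit, hprodA, hprodB]
    simp only [Multiset.map_cons, Multiset.prod_cons, Multiset.map_add, Multiset.prod_add,
      map_neg, C_1, C_0, sub_zero]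
    ring
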